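/- arXiv:1304.7065 — 2 statements merged into one kernel-verified Lean document; each statement's English description precedes it below -/
import Mathlib

section
/- Let f0, f1 be holomorphic on a domain, a = (a0 : a1) ∈ P^1(C) with a0 ≠ 0, set F := a0·f1 − a1·f0, and let z0 be a zero of F with f0(z0) ≠ 0. Then the Wronskian W(f0,f1) = f0·f1' − f1·f0' vanishes at z0 to order exactly ν_F(z0) − 1, where ν_F(z0) is the order of the zero of F at z0. -/
private lemma analyticAt_deriv {f : ℂ → ℂ} {x : ℂ} (h : AnalyticAt ℂ f x) :
    AnalyticAt ℂ (deriv f) x := by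
  obtain ⟨s, hs, hxs⟩ := Filter.eventually_iff_exists_mem.mp h.eventually_analyticAt
  obtain ⟨t, hts, hto, hxt⟩ := mem_nhds_iff.mp hs
  have : AnalyticOnNhd ℂ f t := fun z hz => hxs z (hts hz)
  exact this.deriv x hxt


/-- If `F := a0·f1 - a1·f0` (with `a0 ≠ 0`) has a zero of order `n ≥ 1` at `z0` and
`f0(z0) ≠ 0`, then the Wronskian `W(f0,f1) = f0·f1' - f1·f0'` vanishes at `z0` to
order exactly `n - 1`. -/
theorem wronskian_order_at_zero (Ω : Set ℂ) (hΩ : IsOpen Ω) (f₀ f₁ : ℂ → ℂ)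
    (hf₀ : AnalyticOnNhd ℂ f₀ Ω) (hf₁ : AnalyticOnNhd ℂ f₁ Ω)
    (hred : ∀ z ∈ Ω, f₀ z ≠ 0 ∨ f₁ z ≠ 0)
    (a₀ a₁ : ℂ) (ha₀ : a₀ ≠ 0) (z₀ : ℂ) (hz₀ : z₀ ∈ Ω)
    (hFz₀ : a₀ * f₁ z₀ - a₁ * f₀ z₀ = 0) (hf₀z₀ : f₀ z₀ ≠ 0)
    (hFa : AnalyticAt ℂ (fun z => a₀ * f₁ z - a₁ * f₀ z) z₀)
    (hWa : AnalyticAt ℂ (fun z => f₀ z * deriv f₁ z - f₁ z * deriv f₀ z) z₀)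
    (n : ℕ) (hn : 1 ≤ n) (hord : analyticOrderAt (fun z => a₀ * f₁ z - a₁ * f₀ z) z₀ = (n : ℕ∞)) :
    analyticOrderAt (fun z => f₀ z * deriv f₁ z - f₁ z * deriv f₀ z) z₀ = ((n - 1 : ℕ) : ℕ∞) := by
  obtain ⟨g, hg, hgz₀, hFeq⟩ := hFa.analyticOrderAt_eq_natCast.mp hord
  -- F = a₀ f₁ - a₁ f₀
  set F : ℂ → ℂ := fun z => a₀ * f₁ z - a₁ * f₀ z with hF
  -- candidate factor for W
  set h : ℂ → ℂ := fun z =>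
    a₀⁻¹ * (f₀ z * ((n : ℂ) * g z + (z - z₀) * deriv g z) - (z - z₀) * g z * deriv f₀ z)
    with hhdef
  have hf₀a : AnalyticAt ℂ f₀ z₀ := hf₀ z₀ hz₀
  have hf₁a : AnalyticAt ℂ f₁ z₀ := hf₁ z₀ hz₀
  have hlin : AnalyticAt ℂ (fun z : ℂ => z - z₀) z₀ := analyticAt_id.sub analyticAt_const
  have hh : AnalyticAt ℂ h z₀ := by
    have t1 : AnalyticAt ℂ (fun z => f₀ z * ((n : ℂ) * g z + (z - z₀) * deriv g z)) z₀ :=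
      hf₀a.mul ((analyticAt_const.mul hg).add (hlin.mul (analyticAt_deriv hg)))
    have t2 : AnalyticAt ℂ (fun z => (z - z₀) * g z * deriv f₀ z) z₀ :=
      (hlin.mul hg).mul (analyticAt_deriv hf₀a)
    exact analyticAt_const.mul (t1.sub t2)
  have hhz₀ : h z₀ ≠ 0 := by
    simp only [hhdef, sub_self, zero_mul, mul_zero, add_zero, sub_zero]
    apply mul_ne_zero (inv_ne_zero ha₀)
    apply mul_ne_zero hf₀z₀
    apply mul_ne_zero _ hgz₀
    exact_mod_cast Nat.cast_ne_zero.mpr (by omega)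
  rw [hWa.analyticOrderAt_eq_natCast]
  refine ⟨h, hh, hhz₀, ?_⟩
  -- eventual facts
  have hd₀ : ∀ᶠ z in nhds z₀, DifferentiableAt ℂ f₀ z := by
    filter_upwards [hΩ.mem_nhds hz₀] with z hz using (hf₀ z hz).differentiableAt
  have hd₁ : ∀ᶠ z in nhds z₀, DifferentiableAt ℂ f₁ z := by
    filter_upwards [hΩ.mem_nhds hz₀] with z hz using (hf₁ z hz).differentiableAt
  have hdg : ∀ᶠ z in nhds z₀, DifferentiableAt ℂ g z := by
    filter_upwards [hg.eventually_analyticAt] with z hz using hz.differentiableAt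
  have hFeq' : (fun z => F z) =ᶠ[nhds z₀] fun z => (z - z₀) ^ n * g z := by
    filter_upwards [hFeq] with z hz using by simpa using hz
  have hderivF : deriv F =ᶠ[nhds z₀] deriv (fun z => (z - z₀) ^ n * g z) :=
    hFeq'.deriv
  filter_upwards [hd₀, hd₁, hdg, hFeq', hderivF] with z h0 h1 hgd hFz hdF
  -- compute deriv F z two ways
  have e1 : deriv F z = a₀ * deriv f₁ z - a₁ * deriv f₀ z := by
    rw [hF]
    rw [deriv_fun_sub ((h1.const_mul _)) ((h0.const_mul _)), deriv_const_mul _ h1,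
      deriv_const_mul _ h0]
  have e2 : deriv (fun z => (z - z₀) ^ n * g z) z
      = (n : ℂ) * (z - z₀) ^ (n - 1) * g z + (z - z₀) ^ n * deriv g z := by
    have hp : DifferentiableAt ℂ (fun z : ℂ => (z - z₀) ^ n) z :=
      ((differentiableAt_id.sub_const _)).pow n
    rw [deriv_fun_mul hp hgd]
    congr 1
    · congr 1
      have : deriv (fun z : ℂ => (z - z₀) ^ n) z
          = (n : ℂ) * (z - z₀) ^ (n - 1) * deriv (fun z : ℂ => z - z₀) z := by
        exact deriv_fun_pow (differentiableAt_id.sub_const _) n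
      simp [this]
  have key : a₀ * (f₀ z * deriv f₁ z - f₁ z * deriv f₀ z)
      = f₀ z * deriv F z - F z * deriv f₀ z := by
    rw [e1, hF]; ring
  have hpow : (z - z₀) ^ n = (z - z₀) ^ (n - 1) * (z - z₀) := by
    conv_lhs => rw [show n = (n - 1) + 1 by omega]
    rw [pow_succ]
  have : f₀ z * deriv f₁ z - f₁ z * deriv f₀ z
      = a₀⁻¹ * (f₀ z * deriv F z - F z * deriv f₀ z) := by
    rw [← key, inv_mul_cancel_left₀ ha₀]
  rw [this, hdF, e2, hFz, hpow]
  simp only [hhdef, smul_eq_mul]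
  ring
end

section
/- Let f0, f1 be holomorphic without common zeros on a domain, a^j = (a^j_0 : a^j_1) ∈ P^1(C) distinct unit-norm points, F_j := a^j_0 f_1 − a^j_1 f_0, and suppose every zero of F_j has order at least m_j ≥ 2 for each j. If z0 is a zero of F_i for some i, then the quantity ν_{W(f0,f1)}(z0) − Σ_{j=1}^q (1 − 1/m_j)·ν_{F_j}(z0) equals ν_{F_i}(z0)/m_i − 1, and in particular is ≥ 0. -/
open Finset

/-- If `f0, f1` are holomorphic without common zeros, `a^j` are distinct unit-norm
points of `ℙ¹(ℂ)`, `F_j := a^j_0·f1 - a^j_1·f0` and every zero of `F_j` has order at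
least `m_j ≥ 2`, then at a zero `z0` of `F_i` (with `f0(z0) ≠ 0`),
`ν_W(z0) - Σ_j (1 - 1/m_j)·ν_{F_j}(z0) = ν_{F_i}(z0)/m_i - 1 ≥ 0`. -/
theorem wronskian_order_defect (Ω : Set ℂ) (hΩ : IsOpen Ω) (f₀ f₁ : ℂ → ℂ)
    (hf₀ : AnalyticOnNhd ℂ f₀ Ω) (hf₁ : AnalyticOnNhd ℂ f₁ Ω)
    (hred : ∀ z ∈ Ω, f₀ z ≠ 0 ∨ f₁ z ≠ 0)
    (q : ℕ) (a : Fin q → ℂ × ℂ)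
    (hunit : ∀ j, ‖(a j).1‖ ^ 2 + ‖(a j).2‖ ^ 2 = 1)
    (hdist : ∀ i j, i ≠ j → (a i).1 * (a j).2 ≠ (a j).1 * (a i).2)
    (F : Fin q → ℂ → ℂ) (hFdef : ∀ j z, F j z = (a j).1 * f₁ z - (a j).2 * f₀ z)
    (W : ℂ → ℂ) (hWdef : ∀ z, W z = f₀ z * deriv f₁ z - f₁ z * deriv f₀ z)
    (hFa : ∀ j, ∀ z ∈ Ω, AnalyticAt ℂ (F j) z)
    (hWa : ∀ z ∈ Ω, AnalyticAt ℂ W z)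
    (m : Fin q → ℝ) (hm : ∀ j, 2 ≤ m j)
    (hram : ∀ j, ∀ z, ∀ hz : z ∈ Ω, F j z = 0 →
      ∀ k : ℕ, analyticOrderAt (F j) z = (k : ℕ∞) → m j ≤ (k : ℝ))
    (z₀ : ℂ) (hz₀ : z₀ ∈ Ω) (i : Fin q) (hFi : F i z₀ = 0) (hf₀z₀ : f₀ z₀ ≠ 0)
    (νW : ℕ) (hνW : analyticOrderAt W z₀ = (νW : ℕ∞))
    (νF : Fin q → ℕ) (hνF : ∀ j, analyticOrderAt (F j) z₀ = ((νF j : ℕ∞))) :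
    (νW : ℝ) - ∑ j, (1 - 1 / m j) * (νF j : ℝ) = (νF i : ℝ) / m i - 1 ∧
      0 ≤ (νW : ℝ) - ∑ j, (1 - 1 / m j) * (νF j : ℝ) := by
  -- a_i has nonzero first coordinate
  have ha0 : (a i).1 ≠ 0 := by
    intro h0
    have h2 : (a i).2 ≠ 0 := by
      intro h2
      have := hunit i
      rw [h0, h2] at this
      simp at this
    have hF := hFdef i z₀
    rw [hFi, h0] at hF
    simp at hF
    exact absurd hF (by simp [h2, hf₀z₀])
  -- other F j don't vanish at z₀
  have hFj0 : ∀ j, j ≠ i → F j z₀ ≠ 0 := by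
    intro j hj hj0
    have e1 : (a i).1 * f₁ z₀ - (a i).2 * f₀ z₀ = 0 := by rw [← hFdef i z₀]; exact hFi
    have e2 : (a j).1 * f₁ z₀ - (a j).2 * f₀ z₀ = 0 := by rw [← hFdef j z₀]; exact hj0
    have : ((a i).1 * (a j).2) * f₀ z₀ = ((a j).1 * (a i).2) * f₀ z₀ := by
      linear_combination (a j).1 * e1 - (a i).1 * e2
    exact hdist i j (fun h => hj h.symm) (mul_right_cancel₀ hf₀z₀ this)
  -- their orders are 0
  have hν0 : ∀ j, j ≠ i → νF j = 0 := by
    intro j hj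
    have h0 : analyticOrderAt (F j) z₀ = ((0 : ℕ) : ℕ∞) := by
      rw [(hFa j z₀ hz₀).analyticOrderAt_eq_natCast]
      exact ⟨F j, hFa j z₀ hz₀, hFj0 j hj, by simp⟩
    have := (hνF j).symm.trans h0
    exact_mod_cast this
  -- the order of F i is at least m i ≥ 2
  have hmi : m i ≤ (νF i : ℝ) := hram i z₀ hz₀ hFi (νF i) (hνF i)
  have hmipos : (0:ℝ) < m i := lt_of_lt_of_le (by norm_num) (hm i)
  have hk1 : 1 ≤ νF i := by
    by_contra h
    push_neg at h
    interval_cases h' : νF i <;> simp_all <;> linarith [hm i]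
  obtain ⟨n, hkn⟩ : ∃ n, νF i = n + 1 := ⟨νF i - 1, (Nat.succ_pred_eq_of_pos hk1).symm⟩
  -- factor F i
  obtain ⟨g, hg, hg0, hgeq⟩ := ((hFa i z₀ hz₀).analyticOrderAt_eq_natCast).mp (hνF i)
  have hgeq' : F i =ᶠ[nhds z₀] fun w => (w - z₀) ^ (νF i) * g w :=
    hgeq.mono fun z hz => by simpa using hz
  -- analyticity facts
  have hf₀a : AnalyticAt ℂ f₀ z₀ := hf₀ z₀ hz₀
  have hdf₀ : AnalyticAt ℂ (deriv f₀) z₀ := (hf₀.deriv) z₀ hz₀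
  obtain ⟨U, hU, hgU⟩ := hg.exists_mem_nhds_analyticOnNhd
  have hdg : AnalyticAt ℂ (deriv g) z₀ := (hgU.deriv) z₀ (mem_of_mem_nhds hU)
  -- the cofactor of the Wronskian
  set h : ℂ → ℂ := fun z =>
    (((νF i : ℂ)) * f₀ z * g z + (z - z₀) * (f₀ z * deriv g z - g z * deriv f₀ z)) / (a i).1
    with hh_def
  have hha : AnalyticAt ℂ h z₀ := by
    apply AnalyticAt.div
    · exact ((analyticAt_const.mul hf₀a).mul hg).add
        ((analyticAt_id.sub analyticAt_const).mul ((hf₀a.mul hdg).sub (hg.mul hdf₀)))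
    · exact analyticAt_const
    · exact ha0
  have hhz₀ : h z₀ ≠ 0 := by
    have : h z₀ = ((νF i : ℂ) * f₀ z₀ * g z₀) / (a i).1 := by simp [hh_def]
    rw [this]
    apply div_ne_zero _ ha0
    exact mul_ne_zero (mul_ne_zero (Nat.cast_ne_zero.mpr (by omega)) hf₀z₀) hg0
  -- eventual factorization of W
  have hWord : analyticOrderAt W z₀ = ((n : ℕ) : ℕ∞) := by
    rw [(hWa z₀ hz₀).analyticOrderAt_eq_natCast]
    refine ⟨h, hha, hhz₀, ?_⟩
    have hΩev : ∀ᶠ z in nhds z₀, z ∈ Ω := hΩ.mem_nhds hz₀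
    have hderiv : deriv (F i) =ᶠ[nhds z₀] deriv (fun w => (w - z₀) ^ (νF i) * g w) :=
      hgeq'.deriv
    have hganal : ∀ᶠ z in nhds z₀, AnalyticAt ℂ g z := hg.eventually_analyticAt
    filter_upwards [hΩev, hgeq', hderiv, hganal] with z hzΩ hzF hzD hzg
    have df₀ : DifferentiableAt ℂ f₀ z := (hf₀ z hzΩ).differentiableAt
    have df₁ : DifferentiableAt ℂ f₁ z := (hf₁ z hzΩ).differentiableAt
    have hFfun : F i = fun w => (a i).1 * f₁ w - (a i).2 * f₀ w := funext (hFdef i)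
    have derivFi : deriv (F i) z = (a i).1 * deriv f₁ z - (a i).2 * deriv f₀ z := by
      rw [hFfun, deriv_fun_sub (df₁.const_mul _) (df₀.const_mul _),
        deriv_const_mul _ df₁, deriv_const_mul _ df₀]
    have hder2 : deriv (fun w => (w - z₀) ^ (νF i) * g w) z
        = (νF i : ℂ) * (z - z₀) ^ (νF i - 1) * 1 * g z + (z - z₀) ^ (νF i) * deriv g z := by
      have h1 : HasDerivAt (fun w => (w - z₀) ^ (νF i))
          ((νF i : ℂ) * (z - z₀) ^ (νF i - 1) * 1) z :=
        ((hasDerivAt_id z).sub_const z₀).pow _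
      exact (h1.mul hzg.differentiableAt.hasDerivAt).deriv
    have hD : (a i).1 * deriv f₁ z - (a i).2 * deriv f₀ z
        = (νF i : ℂ) * (z - z₀) ^ (νF i - 1) * 1 * g z + (z - z₀) ^ (νF i) * deriv g z := by
      rw [← derivFi, hzD, hder2]
    have hFc : (a i).1 * f₁ z - (a i).2 * f₀ z = (z - z₀) ^ (νF i) * g z := by
      rw [← hFdef i z]; simpa using hzF
    have hW := hWdef z
    rw [hkn] at hD hFc
    simp only [Nat.add_sub_cancel] at hD
    have key : (a i).1 * W z = (z - z₀) ^ n *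
        (((n:ℂ) + 1) * f₀ z * g z + (z - z₀) * (f₀ z * deriv g z - g z * deriv f₀ z)) := by
      push_cast at hD
      linear_combination (a i).1 * hW + f₀ z * hD - deriv f₀ z * hFc
    show W z = (z - z₀) ^ n • h z
    rw [smul_eq_mul, hh_def]
    rw [mul_div_assoc', eq_div_iff ha0]
    have : (νF i : ℂ) = (n : ℂ) + 1 := by rw [hkn]; push_cast; ring
    rw [this]
    linear_combination key
  -- hence νW = n
  have hνWn : νW = n := by
    have := hνW.symm.trans hWord
    exact_mod_cast this
  -- sum collapses to the i-th term
  have hsum : ∑ j, (1 - 1 / m j) * (νF j : ℝ) = (1 - 1 / m i) * (νF i : ℝ) := by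
    apply Finset.sum_eq_single_of_mem i (Finset.mem_univ i)
    intro j _ hj
    rw [hν0 j hj]
    simp
  have hmine : m i ≠ 0 := ne_of_gt hmipos
  constructor
  · rw [hsum, hνWn, hkn]
    push_cast
    field_simp
    ring
  · rw [hsum, hνWn, hkn]
    have h1 : ((n:ℝ) + 1) / m i - 1 ≥ 0 := by
      rw [ge_iff_le, sub_nonneg, le_div_iff₀ hmipos, one_mul]
      rw [hkn] at hmi
      push_cast at hmi
      linarith
    have heq : (n : ℝ) - (1 - 1 / m i) * ((n + 1 : ℕ) : ℝ) = ((n:ℝ) + 1) / m i - 1 := by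
      push_cast
      field_simp
      ring
    rw [heq]
    exact h1
end
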